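/- Let ρ > 0, m ≥ 1, and let f : (ℝ³)^m → ℂ be a Schwartz function vanishing whenever some |k_j| ≤ ρ. Then for any constant c ≥ 0 the function u(k₁,…,k_m) = f(k₁,…,k_m)/(|k₁| + ⋯ + |k_m| + c) is well defined, Schwartz, and vanishes whenever some |k_j| ≤ ρ. -/

import Mathlib

open Real Filter Set Function

section TG
variable {E F G : Type*} [NormedAddCommGroup E] [NormedSpace ℝ E]
  [NormedAddCommGroup F] [NormedSpace ℝ F] [NormedAddCommGroup G] [NormedSpace ℝ G]

lemma tg_add {f g : E → F} (hf : Function.HasTemperateGrowth f)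
    (hg : Function.HasTemperateGrowth g) :
    Function.HasTemperateGrowth (fun x => f x + g x) := by
  refine ⟨hf.1.add hg.1, fun n => ?_⟩
  obtain ⟨k₁, C₁, hC₁, h₁⟩ := hf.norm_iteratedFDeriv_le_uniform n
  obtain ⟨k₂, C₂, hC₂, h₂⟩ := hg.norm_iteratedFDeriv_le_uniform n
  refine ⟨max k₁ k₂, C₁ + C₂, fun x => ?_⟩
  have hx : (1:ℝ) ≤ 1 + ‖x‖ := by linarith [norm_nonneg x]
  have e : iteratedFDeriv ℝ n (fun x => f x + g x) x
      = iteratedFDeriv ℝ n f x + iteratedFDeriv ℝ n g x :=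
    iteratedFDeriv_add_apply (hf.1.contDiffAt.of_le (by exact_mod_cast le_top))
      (hg.1.contDiffAt.of_le (by exact_mod_cast le_top))
  calc ‖iteratedFDeriv ℝ n (fun x => f x + g x) x‖
      ≤ ‖iteratedFDeriv ℝ n f x‖ + ‖iteratedFDeriv ℝ n g x‖ := by rw [e]; exact norm_add_le _ _
    _ ≤ C₁ * (1+‖x‖)^k₁ + C₂ * (1+‖x‖)^k₂ := add_le_add (h₁ n le_rfl x) (h₂ n le_rfl x)
    _ ≤ C₁ * (1+‖x‖)^(max k₁ k₂) + C₂ * (1+‖x‖)^(max k₁ k₂) :=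
        add_le_add
          (mul_le_mul_of_nonneg_left (pow_le_pow_right₀ hx (le_max_left _ _)) hC₁)
          (mul_le_mul_of_nonneg_left (pow_le_pow_right₀ hx (le_max_right _ _)) hC₂)
    _ = (C₁ + C₂) * (1+‖x‖)^(max k₁ k₂) := by ring

lemma tg_sum {ι : Type*} (s : Finset ι) (g : ι → E → F)
    (h : ∀ j ∈ s, Function.HasTemperateGrowth (g j)) :
    Function.HasTemperateGrowth (fun x => ∑ j ∈ s, g j x) := by
  classical
  induction s using Finset.induction_on with
  | empty => simpa using Function.HasTemperateGrowth.zero (E := E) (F := F)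
  | @insert a s hnot ih =>
    simp only [Finset.sum_insert hnot]
    exact tg_add (h a (Finset.mem_insert_self a s))
      (ih fun j hj => h j (Finset.mem_insert_of_mem hj))

lemma tg_mul {f g : E → ℝ} (hf : Function.HasTemperateGrowth f)
    (hg : Function.HasTemperateGrowth g) :
    Function.HasTemperateGrowth (fun x => f x * g x) := by
  refine ⟨hf.1.mul hg.1, fun n => ?_⟩
  obtain ⟨k₁, C₁, hC₁, h₁⟩ := hf.norm_iteratedFDeriv_le_uniform n
  obtain ⟨k₂, C₂, hC₂, h₂⟩ := hg.norm_iteratedFDeriv_le_uniform n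
  refine ⟨k₁ + k₂, 2^n * (C₁ * C₂), fun x => ?_⟩
  calc ‖iteratedFDeriv ℝ n (fun y => f y * g y) x‖
      ≤ ∑ i ∈ Finset.range (n + 1),
        (n.choose i : ℝ) * ‖iteratedFDeriv ℝ i f x‖ * ‖iteratedFDeriv ℝ (n - i) g x‖ :=
        norm_iteratedFDeriv_mul_le hf.1 hg.1 x (mod_cast le_top)
    _ ≤ ∑ i ∈ Finset.range (n + 1),
        (n.choose i : ℝ) * (C₁ * C₂ * (1+‖x‖)^(k₁+k₂)) := by
        refine Finset.sum_le_sum fun i hi => ?_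
        have hi' : i ≤ n := Finset.mem_range_succ_iff.1 hi
        have e1 := h₁ i hi' x
        have e2 := h₂ (n - i) (Nat.sub_le _ _) x
        have : ‖iteratedFDeriv ℝ i f x‖ * ‖iteratedFDeriv ℝ (n - i) g x‖
            ≤ (C₁ * (1+‖x‖)^k₁) * (C₂ * (1+‖x‖)^k₂) :=
          mul_le_mul e1 e2 (norm_nonneg _) (by positivity)
        have e3 : (C₁ * (1+‖x‖)^k₁) * (C₂ * (1+‖x‖)^k₂) = C₁ * C₂ * (1+‖x‖)^(k₁+k₂) := by
          rw [pow_add]; ring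
        rw [mul_assoc]
        exact mul_le_mul_of_nonneg_left (e3 ▸ this) (by positivity)
    _ = (∑ i ∈ Finset.range (n + 1), (n.choose i : ℝ)) * (C₁ * C₂ * (1+‖x‖)^(k₁+k₂)) :=
        (Finset.sum_mul _ _ _).symm
    _ = 2^n * (C₁ * C₂) * (1+‖x‖)^(k₁+k₂) := by
        have : (∑ i ∈ Finset.range (n + 1), (n.choose i : ℝ)) = 2^n := by
          rw [← Nat.cast_sum, Nat.sum_range_choose]; push_cast; ring
        rw [this]; ring

lemma tg_comp {g : F → G} {f : E → F} (hg : Function.HasTemperateGrowth g)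
    (hf : Function.HasTemperateGrowth f) :
    Function.HasTemperateGrowth (g ∘ f) := by
  refine ⟨hg.1.comp hf.1, fun n => ?_⟩
  obtain ⟨kg, Cg, hCg, hgb⟩ := hg.norm_iteratedFDeriv_le_uniform n
  obtain ⟨kf, Cf, hCf, hfb⟩ := hf.norm_iteratedFDeriv_le_uniform n
  refine ⟨kf * kg + kf * n, (n.factorial : ℝ) * (Cg * (1 + Cf)^kg) * (max Cf 1)^n, fun x => ?_⟩
  have hx : (1:ℝ) ≤ 1 + ‖x‖ := by linarith [norm_nonneg x]
  have hxp : ∀ j : ℕ, (1:ℝ) ≤ (1+‖x‖)^j := fun j => one_le_pow₀ hx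
  set D : ℝ := max Cf 1 * (1+‖x‖)^kf with hD
  have hD1 : (1:ℝ) ≤ D := by
    have h1 := hxp kf
    have h2 : (1:ℝ) ≤ max Cf 1 := le_max_right _ _
    nlinarith
  have hC : ∀ i, i ≤ n → ‖iteratedFDeriv ℝ i g (f x)‖ ≤ Cg * ((1 + Cf)^kg * (1+‖x‖)^(kf*kg)) := by
    intro i hi
    refine (hgb i hi (f x)).trans ?_
    have hfx : ‖f x‖ ≤ Cf * (1+‖x‖)^kf := by simpa using hfb 0 (Nat.zero_le n) x
    have h1 : 1 + ‖f x‖ ≤ (1 + Cf) * (1+‖x‖)^kf := by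
      have := hxp kf
      calc 1 + ‖f x‖ ≤ 1 + Cf * (1+‖x‖)^kf := by linarith
        _ ≤ (1+‖x‖)^kf + Cf * (1+‖x‖)^kf := by linarith
        _ = (1 + Cf) * (1+‖x‖)^kf := by ring
    have h2 : (1 + ‖f x‖)^kg ≤ ((1 + Cf) * (1+‖x‖)^kf)^kg := by
      have : (0:ℝ) ≤ 1 + ‖f x‖ := by positivity
      exact pow_le_pow_left₀ this h1 kg
    calc Cg * (1 + ‖f x‖)^kg ≤ Cg * ((1 + Cf) * (1+‖x‖)^kf)^kg :=
          mul_le_mul_of_nonneg_left h2 hCg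
      _ = Cg * ((1 + Cf)^kg * (1+‖x‖)^(kf*kg)) := by rw [mul_pow, ← pow_mul]
  have hDb : ∀ i, 1 ≤ i → i ≤ n → ‖iteratedFDeriv ℝ i f x‖ ≤ D^i := by
    intro i h1 h2
    refine (hfb i h2 x).trans ?_
    calc Cf * (1+‖x‖)^kf ≤ max Cf 1 * (1+‖x‖)^kf :=
          mul_le_mul_of_nonneg_right (le_max_left _ _) (by positivity)
      _ = D^1 := by rw [pow_one]
      _ ≤ D^i := pow_le_pow_right₀ hD1 h1
  have key := norm_iteratedFDeriv_comp_le hg.1 hf.1 (mod_cast le_top) x hC hDb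
  refine key.trans (le_of_eq ?_)
  rw [hD, mul_pow, ← pow_mul, pow_add]
  ring

end TG

section LOC
variable {E F : Type*} [NormedAddCommGroup E] [NormedSpace ℝ E] [ProperSpace E]
  [NormedAddCommGroup F] [NormedSpace ℝ F]

lemma tg_loc {f : E → F} (hf : ContDiff ℝ (⊤ : ℕ∞) f) (R : ℝ)
    (hb : ∀ n : ℕ, ∃ (k : ℕ) (C : ℝ), ∀ x, R ≤ ‖x‖ → ‖iteratedFDeriv ℝ n f x‖ ≤ C * (1 + ‖x‖) ^ k) :
    Function.HasTemperateGrowth f := by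
  refine ⟨hf, fun n => ?_⟩
  obtain ⟨k, C, hC⟩ := hb n
  have hcont : Continuous (iteratedFDeriv ℝ n f) :=
    hf.continuous_iteratedFDeriv (mod_cast le_top)
  obtain ⟨M, hM⟩ := (isCompact_closedBall (0:E) R).exists_bound_of_continuousOn
    (hcont.norm.continuousOn)
  refine ⟨k, max C 0 + max M 0, fun x => ?_⟩
  have hx : (1:ℝ) ≤ 1 + ‖x‖ := by linarith [norm_nonneg x]
  have hxp : (1:ℝ) ≤ (1+‖x‖)^k := one_le_pow₀ hx
  rcases le_or_gt R ‖x‖ with h | h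
  · refine (hC x h).trans ?_
    have : C ≤ max C 0 + max M 0 := by
      have := le_max_left C 0
      have := le_max_left M 0
      have := le_max_right M 0
      linarith [le_max_right C 0]
    exact mul_le_mul_of_nonneg_right this (by positivity)
  · have hmem : x ∈ Metric.closedBall (0:E) R := by
      simpa [Metric.mem_closedBall, dist_eq_norm] using h.le
    have h1 : ‖iteratedFDeriv ℝ n f x‖ ≤ M := by simpa using hM x hmem
    have h2 : M ≤ max C 0 + max M 0 := by
      have := le_max_right C 0; have := le_max_left M 0; linarith
    calc ‖iteratedFDeriv ℝ n f x‖ ≤ max C 0 + max M 0 := h1.trans h2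
      _ = (max C 0 + max M 0) * 1 := (mul_one _).symm
      _ ≤ (max C 0 + max M 0) * (1+‖x‖)^k := by
          refine mul_le_mul_of_nonneg_left hxp (by positivity)

end LOC

section ONED

lemma iter_inv (n : ℕ) : ∀ y : ℝ, 0 < y →
    iteratedDeriv n (fun z : ℝ => z⁻¹) y = ((-1)^n * n.factorial : ℝ) * y ^ (-(n+1) : ℤ) := by
  induction n with
  | zero =>
    intro y hy
    simp [iteratedDeriv_zero, zpow_neg]
  | succ n ih =>
    intro y hy
    rw [iteratedDeriv_succ]
    have hev : iteratedDeriv n (fun z : ℝ => z⁻¹)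
        =ᶠ[nhds y] fun z => ((-1)^n * n.factorial : ℝ) * z ^ (-(n+1) : ℤ) := by
      filter_upwards [Ioi_mem_nhds hy] with z hz using ih z hz
    rw [hev.deriv_eq]
    rw [deriv_const_mul _ (differentiableAt_zpow.2 (Or.inl hy.ne'))]
    rw [deriv_zpow]
    have e1 : (-(↑n+1) : ℤ) - 1 = -(↑(n+1)+1) := by push_cast; ring
    rw [e1]
    have e2 : ((-(↑n+1) : ℤ) : ℝ) = -(n+1) := by push_cast; ring
    rw [e2]
    push_cast [Nat.factorial_succ]
    ring

lemma iter_rpow (n : ℕ) : ∀ y : ℝ, 0 < y →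
    iteratedDeriv n (fun t : ℝ => t ^ (1/2 : ℝ)) y
      = (∏ i ∈ Finset.range n, ((1:ℝ)/2 - i)) * y ^ ((1/2 : ℝ) - n) := by
  induction n with
  | zero =>
    intro y hy
    simp [iteratedDeriv_zero]
  | succ n ih =>
    intro y hy
    rw [iteratedDeriv_succ]
    have hev : iteratedDeriv n (fun t : ℝ => t ^ (1/2 : ℝ))
        =ᶠ[nhds y] fun t => (∏ i ∈ Finset.range n, ((1:ℝ)/2 - i)) * t ^ ((1/2 : ℝ) - n) := by
      filter_upwards [Ioi_mem_nhds hy] with z hz using ih z hz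
    rw [hev.deriv_eq]
    rw [deriv_const_mul _ (Real.differentiableAt_rpow_const_of_ne _ hy.ne')]
    rw [Real.deriv_rpow_const]
    rw [Finset.prod_range_succ]
    have e1 : (1/2 : ℝ) - ↑n - 1 = 1/2 - ↑(n+1) := by push_cast; ring
    rw [e1]
    push_cast
    ring

end ONED

section INV
variable {E : Type*} [NormedAddCommGroup E] [NormedSpace ℝ E]

lemma tg_inv {f : E → ℝ} (hf : Function.HasTemperateGrowth f) {δ : ℝ} (hδ : 0 < δ)
    (hfd : ∀ x, δ ≤ f x) :
    Function.HasTemperateGrowth (fun x => (f x)⁻¹) := by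
  have hne : ∀ x, f x ≠ 0 := fun x => (hδ.trans_le (hfd x)).ne'
  refine ⟨hf.1.inv hne, fun n => ?_⟩
  obtain ⟨k, C, hC0, hfb⟩ := hf.norm_iteratedFDeriv_le_uniform n
  set Cg : ℝ := (n.factorial : ℝ) * (max 1 δ⁻¹)^(n+1) with hCg
  refine ⟨k * n, (n.factorial : ℝ) * Cg * (max C 1)^n, fun x => ?_⟩
  have hx : (1:ℝ) ≤ 1 + ‖x‖ := by linarith [norm_nonneg x]
  have hxp : ∀ j : ℕ, (1:ℝ) ≤ (1+‖x‖)^j := fun j => one_le_pow₀ hx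
  set D : ℝ := max C 1 * (1+‖x‖)^k with hD
  have hD1 : (1:ℝ) ≤ D := by
    have h1 := hxp k
    have h2 : (1:ℝ) ≤ max C 1 := le_max_right _ _
    nlinarith
  set t : Set ℝ := Ioi (δ/2) with ht
  have hto : IsOpen t := isOpen_Ioi
  have hmaps : MapsTo f univ t := fun y _ => by
    have := hfd y; simp only [ht, mem_Ioi]; linarith
  -- bound on iterated derivatives of the inverse function on t
  have hCb : ∀ i, i ≤ n → ‖iteratedFDerivWithin ℝ i (fun z : ℝ => z⁻¹) t (f x)‖ ≤ Cg := by
    intro i hi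
    have hmem : f x ∈ t := hmaps (mem_univ x)
    rw [iteratedFDerivWithin_of_isOpen i hto hmem]
    rw [norm_iteratedFDeriv_eq_norm_iteratedDeriv]
    have hfx : (0:ℝ) < f x := hδ.trans_le (hfd x)
    rw [iter_inv i (f x) hfx]
    have e : ‖((-1)^i * i.factorial : ℝ) * (f x) ^ (-(i+1) : ℤ)‖
        = (i.factorial : ℝ) * ((f x) ^ (i+1))⁻¹ := by
      rw [norm_mul]
      congr 1
      · rw [norm_mul, norm_pow, norm_neg, norm_one, one_pow, one_mul]
        simp
      · rw [← zpow_natCast (f x) (i+1), ← zpow_neg]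
        rw [Real.norm_eq_abs, abs_of_pos (zpow_pos hfx _)]
        congr 1
        all_goals (push_cast; ring)
    rw [e]
    have h1 : ((f x) ^ (i+1))⁻¹ ≤ (δ ^ (i+1))⁻¹ := by
      apply inv_anti₀ (pow_pos hδ _)
      exact pow_le_pow_left₀ hδ.le (hfd x) _
    have h2 : (δ ^ (i+1))⁻¹ ≤ (max 1 δ⁻¹)^(n+1) := by
      rw [← inv_pow]
      calc (δ⁻¹) ^ (i+1) ≤ (max 1 δ⁻¹) ^ (i+1) :=
            pow_le_pow_left₀ (by positivity) (le_max_right _ _) _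
        _ ≤ (max 1 δ⁻¹) ^ (n+1) := pow_le_pow_right₀ (le_max_left _ _) (by omega)
    have h3 : (i.factorial : ℝ) ≤ (n.factorial : ℝ) := by
      exact_mod_cast Nat.factorial_le hi
    calc (i.factorial : ℝ) * ((f x) ^ (i+1))⁻¹ ≤ (n.factorial : ℝ) * (max 1 δ⁻¹)^(n+1) := by
          apply mul_le_mul h3 (h1.trans h2) (by positivity) (by positivity)
      _ = Cg := hCg.symm
  have hDb : ∀ i, 1 ≤ i → i ≤ n → ‖iteratedFDerivWithin ℝ i f univ x‖ ≤ D^i := by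
    intro i h1 h2
    rw [iteratedFDerivWithin_univ]
    refine (hfb i h2 x).trans ?_
    calc C * (1+‖x‖)^k ≤ max C 1 * (1+‖x‖)^k :=
          mul_le_mul_of_nonneg_right (le_max_left _ _) (by positivity)
      _ = D^1 := by rw [pow_one]
      _ ≤ D^i := pow_le_pow_right₀ hD1 h1
  have hg : ContDiffOn ℝ (⊤ : ℕ∞) (fun z : ℝ => z⁻¹) t := by
    refine (contDiffOn_inv ℝ).mono fun y hy => ?_
    simp only [ht, mem_Ioi] at hy
    simp only [mem_compl_iff, mem_singleton_iff]
    intro h; rw [h] at hy; linarith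
  have key := norm_iteratedFDerivWithin_comp_le hg (hf.1.contDiffOn) (mod_cast le_top)
    (hto.uniqueDiffOn) uniqueDiffOn_univ hmaps (mem_univ x) hCb hDb
  rw [iteratedFDerivWithin_univ] at key
  have e : ((fun z : ℝ => z⁻¹) ∘ f) = fun x => (f x)⁻¹ := rfl
  rw [e] at key
  refine key.trans (le_of_eq ?_)
  rw [hD, mul_pow, ← pow_mul]
  ring

end INV

section THETA

variable {ρ : ℝ}

noncomputable def theta (ρ t : ℝ) : ℝ :=
  ρ/2 + Real.smoothTransition ((2*t - ρ)/ρ) * (t - ρ/2)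

lemma theta_contDiff (hρ : 0 < ρ) : ContDiff ℝ (⊤ : ℕ∞) (theta ρ) := by
  unfold theta
  refine contDiff_const.add (ContDiff.mul ?_ (contDiff_id.sub contDiff_const))
  exact Real.smoothTransition.contDiff.comp
    (((contDiff_const.mul contDiff_id).sub contDiff_const).div_const _)

lemma theta_eq_self (hρ : 0 < ρ) {t : ℝ} (ht : ρ ≤ t) : theta ρ t = t := by
  unfold theta
  rw [Real.smoothTransition.one_of_one_le (by rw [le_div_iff₀ hρ]; linarith)]
  ring

lemma theta_eq_half (hρ : 0 < ρ) {t : ℝ} (ht : t ≤ ρ/2) : theta ρ t = ρ/2 := by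
  unfold theta
  rw [Real.smoothTransition.zero_of_nonpos (div_nonpos_iff.2 (Or.inr ⟨by linarith, hρ.le⟩))]
  ring

lemma theta_ge (hρ : 0 < ρ) (t : ℝ) : ρ/2 ≤ theta ρ t := by
  rcases le_or_gt t (ρ/2) with h | h
  · rw [theta_eq_half hρ h]
  · unfold theta
    nlinarith [Real.smoothTransition.nonneg ((2*t - ρ)/ρ)]

end THETA

section HNORM

local notation "E₃" => EuclideanSpace ℝ (Fin 3)

lemma q_tg : Function.HasTemperateGrowth (fun y : E₃ => ‖y‖^2) := by
  have e : (fun y : E₃ => ‖y‖^2)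
      = fun y => ∑ i : Fin 3, (EuclideanSpace.proj (𝕜 := ℝ) i y) * (EuclideanSpace.proj (𝕜 := ℝ) i y) := by
    funext y
    rw [EuclideanSpace.norm_eq, Real.sq_sqrt (by positivity)]
    refine Finset.sum_congr rfl fun i _ => ?_
    simp [Real.norm_eq_abs, sq_abs, sq]
  rw [e]
  exact tg_sum _ _ fun i _ =>
    tg_mul (EuclideanSpace.proj (𝕜 := ℝ) i).hasTemperateGrowth
      (EuclideanSpace.proj (𝕜 := ℝ) i).hasTemperateGrowth

lemma h_contDiff (hρ : 0 < ρ) : ContDiff ℝ (⊤ : ℕ∞) (fun x : E₃ => theta ρ ‖x‖) := by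
  rw [contDiff_iff_contDiffAt]
  intro x
  rcases lt_or_ge ‖x‖ (ρ/2) with hlt | hge
  · have hop : IsOpen {y : E₃ | ‖y‖ < ρ/2} := isOpen_lt continuous_norm continuous_const
    have hev : (fun y : E₃ => theta ρ ‖y‖) =ᶠ[nhds x] fun _ => ρ/2 := by
      filter_upwards [hop.mem_nhds hlt] with y hy using theta_eq_half hρ hy.le
    exact contDiffAt_const.congr_of_eventuallyEq hev
  · have hx0 : x ≠ 0 := by
      intro h; rw [h, norm_zero] at hge; linarith
    exact ((theta_contDiff hρ).contDiffAt).comp x (contDiffAt_norm ℝ hx0)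

lemma prod_range_cast_factorial (i : ℕ) :
    (∏ j ∈ Finset.range i, ((j:ℝ)+1)) = (i.factorial : ℝ) := by
  induction i with
  | zero => simp
  | succ a iha => rw [Finset.prod_range_succ, iha, Nat.factorial_succ]; push_cast; ring

lemma prod_half_sub_le (i n : ℕ) (hin : i ≤ n) :
    |∏ j ∈ Finset.range i, ((1:ℝ)/2 - j)| ≤ (n.factorial : ℝ) := by
  have e1 : |∏ j ∈ Finset.range i, ((1:ℝ)/2 - j)| ≤ ∏ j ∈ Finset.range i, ((j:ℝ)+1) := by
    rw [Finset.abs_prod]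
    refine Finset.prod_le_prod (fun j _ => abs_nonneg _) fun j _ => ?_
    rw [abs_le]
    constructor <;> [skip; skip] <;> (have : (0:ℝ) ≤ (j:ℝ) := Nat.cast_nonneg j; linarith)
  refine e1.trans ?_
  rw [prod_range_cast_factorial]
  exact_mod_cast Nat.factorial_le hin

lemma h_tg (hρ : 0 < ρ) : Function.HasTemperateGrowth (fun x : E₃ => theta ρ ‖x‖) := by
  refine tg_loc (h_contDiff hρ) (2*ρ) fun n => ?_
  obtain ⟨kq, Cq, hCq0, hqb⟩ := q_tg.norm_iteratedFDeriv_le_uniform n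
  set w : ℝ → ℝ := fun t => t ^ (1/2 : ℝ) with hw
  set s : Set E₃ := {y | ρ < ‖y‖} with hs
  have hso : IsOpen s := isOpen_lt continuous_const continuous_norm
  set t : Set ℝ := Ioi (ρ^2) with htt
  have hto : IsOpen t := isOpen_Ioi
  have hρ2 : (0:ℝ) < ρ^2 := by positivity
  have hEq : EqOn (fun x : E₃ => theta ρ ‖x‖) (w ∘ fun y : E₃ => ‖y‖^2) s := by
    intro y hy
    have hy' : ρ < ‖y‖ := hy
    have e1 : theta ρ ‖y‖ = ‖y‖ := theta_eq_self hρ hy'.le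
    have e2 : w (‖y‖^2) = ‖y‖ := by
      rw [hw]
      simp only
      rw [← Real.rpow_natCast ‖y‖ 2, ← Real.rpow_mul (norm_nonneg y)]
      norm_num
    simp only [comp_apply]
    rw [e1, e2]
  have hmaps : MapsTo (fun y : E₃ => ‖y‖^2) s t := by
    intro y hy
    have hy' : ρ < ‖y‖ := hy
    simp only [htt, mem_Ioi]
    nlinarith
  refine ⟨2 + kq*n, (n.factorial:ℝ) * ((n.factorial:ℝ) * (max 1 (ρ^2)⁻¹)^n) * (max Cq 1)^n,
    fun x hx => ?_⟩
  have hxs : x ∈ s := by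
    simp only [hs, mem_setOf_eq]; linarith
  have hx1 : (1:ℝ) ≤ 1 + ‖x‖ := by linarith [norm_nonneg x]
  have hxp : ∀ j : ℕ, (1:ℝ) ≤ (1+‖x‖)^j := fun j => one_le_pow₀ hx1
  set D : ℝ := max Cq 1 * (1+‖x‖)^kq with hD
  have hD1 : (1:ℝ) ≤ D := by
    have h1 := hxp kq
    have h2 : (1:ℝ) ≤ max Cq 1 := le_max_right _ _
    nlinarith
  set y : ℝ := ‖x‖^2 with hy
  have hyt : y ∈ t := hmaps hxs
  have hylt : ρ^2 < y := by simpa [htt, mem_Ioi] using hyt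
  have hypos : (0:ℝ) < y := hρ2.trans hylt
  -- bound on derivatives of w on t at y
  have hCb : ∀ i, i ≤ n →
      ‖iteratedFDerivWithin ℝ i w t y‖ ≤ (n.factorial:ℝ) * (max 1 (ρ^2)⁻¹)^n * (1 + y) := by
    intro i hi
    rw [iteratedFDerivWithin_of_isOpen i hto hyt, norm_iteratedFDeriv_eq_norm_iteratedDeriv]
    rw [iter_rpow i y hypos]
    rw [Real.norm_eq_abs, abs_mul]
    have b1 := prod_half_sub_le i n hi
    have b2 : |y ^ ((1/2:ℝ) - i)| ≤ (max 1 (ρ^2)⁻¹)^n * (1 + y) := by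
      rw [abs_of_pos (Real.rpow_pos_of_pos hypos _)]
      have e3 : y ^ ((1/2:ℝ) - i) = y ^ (1/2:ℝ) * y ^ (-(i:ℝ)) := by
        rw [← Real.rpow_add hypos]; ring_nf
      rw [e3]
      have b3 : y ^ (1/2:ℝ) ≤ 1 + y := by
        rcases le_or_gt y 1 with h | h
        · have := Real.rpow_le_one hypos.le h (by norm_num : (0:ℝ) ≤ 1/2)
          linarith
        · have : y ^ (1/2:ℝ) ≤ y ^ (1:ℝ) :=
            Real.rpow_le_rpow_of_exponent_le h.le (by norm_num)
          rw [Real.rpow_one] at this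
          linarith
      have b4 : y ^ (-(i:ℝ)) ≤ (max 1 (ρ^2)⁻¹)^n := by
        rw [Real.rpow_neg hypos.le, Real.rpow_natCast]
        have : (y^i)⁻¹ ≤ ((ρ^2)^i)⁻¹ := by
          apply inv_anti₀ (by positivity)
          exact pow_le_pow_left₀ hρ2.le hylt.le i
        refine this.trans ?_
        rw [← inv_pow]
        calc ((ρ^2)⁻¹)^i ≤ (max 1 (ρ^2)⁻¹)^i :=
              pow_le_pow_left₀ (by positivity) (le_max_right _ _) _
          _ ≤ (max 1 (ρ^2)⁻¹)^n := pow_le_pow_right₀ (le_max_left _ _) hi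
      calc y ^ (1/2:ℝ) * y ^ (-(i:ℝ)) ≤ (1 + y) * (max 1 (ρ^2)⁻¹)^n := by
            apply mul_le_mul b3 b4 (Real.rpow_pos_of_pos hypos _).le (by positivity)
        _ = (max 1 (ρ^2)⁻¹)^n * (1 + y) := by ring
    calc |∏ j ∈ Finset.range i, ((1:ℝ)/2 - j)| * |y ^ ((1/2:ℝ) - i)|
        ≤ (n.factorial:ℝ) * ((max 1 (ρ^2)⁻¹)^n * (1 + y)) := by
          apply mul_le_mul b1 b2 (abs_nonneg _) (by positivity)
      _ = (n.factorial:ℝ) * (max 1 (ρ^2)⁻¹)^n * (1 + y) := by ring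
  have hDb : ∀ i, 1 ≤ i → i ≤ n →
      ‖iteratedFDerivWithin ℝ i (fun y : E₃ => ‖y‖^2) s x‖ ≤ D^i := by
    intro i h1 h2
    rw [iteratedFDerivWithin_of_isOpen i hso hxs]
    refine (hqb i h2 x).trans ?_
    calc Cq * (1+‖x‖)^kq ≤ max Cq 1 * (1+‖x‖)^kq :=
          mul_le_mul_of_nonneg_right (le_max_left _ _) (by positivity)
      _ = D^1 := by rw [pow_one]
      _ ≤ D^i := pow_le_pow_right₀ hD1 h1
  have hgc : ContDiffOn ℝ (⊤ : ℕ∞) w t := by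
    intro z hz
    have hz' : (0:ℝ) < z := hρ2.trans hz
    exact (Real.contDiffAt_rpow_const_of_ne hz'.ne').contDiffWithinAt
  have key := norm_iteratedFDerivWithin_comp_le hgc (q_tg.1.contDiffOn) (mod_cast le_top)
    (hto.uniqueDiffOn) (hso.uniqueDiffOn) hmaps hxs hCb hDb
  have e0 : ‖iteratedFDeriv ℝ n (fun x : E₃ => theta ρ ‖x‖) x‖
      = ‖iteratedFDerivWithin ℝ n (w ∘ fun y : E₃ => ‖y‖^2) s x‖ := by
    rw [← iteratedFDerivWithin_congr hEq hxs n, iteratedFDerivWithin_of_isOpen n hso hxs]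
  rw [e0]
  refine key.trans ?_
  have hy2 : 1 + y ≤ (1+‖x‖)^2 := by
    rw [hy]
    nlinarith [norm_nonneg x]
  calc (n.factorial:ℝ) * ((n.factorial:ℝ) * (max 1 (ρ^2)⁻¹)^n * (1 + y)) * D^n
      ≤ (n.factorial:ℝ) * ((n.factorial:ℝ) * (max 1 (ρ^2)⁻¹)^n * (1+‖x‖)^2) * D^n := by
        have hD0 : (0:ℝ) ≤ D := le_trans zero_le_one hD1
        gcongr
    _ = (n.factorial:ℝ) * ((n.factorial:ℝ) * (max 1 (ρ^2)⁻¹)^n) * (max Cq 1)^n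
        * ((1+‖x‖)^2 * (1+‖x‖)^(kq*n)) := by
        rw [hD, mul_pow, ← pow_mul]; ring
    _ = (n.factorial:ℝ) * ((n.factorial:ℝ) * (max 1 (ρ^2)⁻¹)^n) * (max Cq 1)^n
        * (1+‖x‖)^(2 + kq*n) := by rw [pow_add]

end HNORM

/-- Division of a Schwartz function vanishing near the collision set |k_j| ≤ ρ by
|k₁| + ⋯ + |k_m| + c yields a Schwartz function vanishing on the same set. -/
theorem schwartz_div_sum_norms (ρ : ℝ) (hρ : 0 < ρ) (m : ℕ) (hm : 1 ≤ m) (c : ℝ) (hc : 0 ≤ c)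
    (f : SchwartzMap (Fin m → EuclideanSpace ℝ (Fin 3)) ℂ)
    (hvan : ∀ k : Fin m → EuclideanSpace ℝ (Fin 3), (∃ j, ‖k j‖ ≤ ρ) → f k = 0) :
    ∃ u : SchwartzMap (Fin m → EuclideanSpace ℝ (Fin 3)) ℂ,
      (∀ k, u k = f k / ((∑ j, ‖k j‖ : ℝ) + c)) ∧
      (∀ k : Fin m → EuclideanSpace ℝ (Fin 3), (∃ j, ‖k j‖ ≤ ρ) → u k = 0) := by
  set E := Fin m → EuclideanSpace ℝ (Fin 3) with hE
  set G : E → ℝ := fun k => (∑ j, theta ρ ‖k j‖) + c with hG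
  have hGtg : Function.HasTemperateGrowth G := by
    refine tg_add ?_ (Function.HasTemperateGrowth.const c)
    refine tg_sum Finset.univ (fun j (k : E) => theta ρ ‖k j‖) fun j _ => ?_
    have h := tg_comp (h_tg hρ) (ContinuousLinearMap.proj (R := ℝ)
        (φ := fun _ : Fin m => EuclideanSpace ℝ (Fin 3)) j).hasTemperateGrowth
    exact h
  have hGlow : ∀ k, ρ/2 ≤ G k := by
    intro k
    have h1 : ∀ j ∈ Finset.univ, ρ/2 ≤ theta ρ ‖k j‖ := fun j _ => theta_ge hρ _
    have h2 : (m : ℝ) * (ρ/2) ≤ ∑ j, theta ρ ‖k j‖ := by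
      calc (m : ℝ) * (ρ/2) = ∑ _j : Fin m, (ρ/2) := by
            rw [Finset.sum_const, Finset.card_univ, Fintype.card_fin, nsmul_eq_mul]
        _ ≤ ∑ j, theta ρ ‖k j‖ := Finset.sum_le_sum h1
    have h3 : (1 : ℝ) ≤ (m : ℝ) := by exact_mod_cast hm
    have : ρ/2 ≤ (m : ℝ) * (ρ/2) := by nlinarith
    rw [hG]; simp only
    linarith
  have hHtg : Function.HasTemperateGrowth (fun k : E => (G k)⁻¹) :=
    tg_inv hGtg (by positivity) hGlow
  set B : ℂ →L[ℝ] ℝ →L[ℝ] ℂ := (ContinuousLinearMap.lsmul ℝ ℝ : ℝ →L[ℝ] ℂ →L[ℝ] ℂ).flip with hB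
  refine ⟨SchwartzMap.bilinLeftCLM B hHtg f, ?_, ?_⟩
  · intro k
    have hu : (SchwartzMap.bilinLeftCLM B hHtg f) k = (G k)⁻¹ • f k := rfl
    by_cases hk : ∃ j, ‖k j‖ ≤ ρ
    · rw [hu, hvan k hk, smul_zero, zero_div]
    · push_neg at hk
      have hGk : G k = (∑ j, ‖k j‖) + c := by
        rw [hG]; simp only
        congr 1
        exact Finset.sum_congr rfl fun j _ => theta_eq_self hρ (hk j).le
      rw [hu, hGk, Complex.real_smul, Complex.ofReal_inv, div_eq_mul_inv, mul_comm]
      push_cast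
      ring
  · intro k hk
    have hu : (SchwartzMap.bilinLeftCLM B hHtg f) k = (G k)⁻¹ • f k := rfl
    rw [hu, hvan k hk, smul_zero]
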